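/- Let λ < 0, ω ∈ (0, ∞], and let x, θ : ℝ → ℝ with θ differentiable on [0, ω), θ(0) = 0, x(s) > 0 for all s ∈ (0, ω), and θ'(s) sin θ(s) = x(s)(cos θ(s) + λ) for all s ∈ [0, ω). Then θ(s) < π/2 for every s ∈ [0, ω). -/

import Mathlib

open Real Set

/-- For `λ < 0`, a solution of the generating-curve system on `[0, ω)`
with `θ(0) = 0` and `x > 0` on `(0, ω)` satisfies `θ(s) < π/2` on `[0, ω)`. -/
theorem rotational_translator_angle_lt_pi_div_two
    (lam : ℝ) (hlam : lam < 0) (ω : EReal) (hω : 0 < ω)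
    (x θ θ' : ℝ → ℝ) (hθ0 : θ 0 = 0)
    (hxpos : ∀ s : ℝ, 0 < s → (s : EReal) < ω → 0 < x s)
    (hθ : ∀ s : ℝ, 0 ≤ s → (s : EReal) < ω →
      HasDerivWithinAt θ (θ' s) {r : ℝ | 0 ≤ r ∧ (r : EReal) < ω} s)
    (heq : ∀ s : ℝ, 0 ≤ s → (s : EReal) < ω →
      θ' s * Real.sin (θ s) = x s * (Real.cos (θ s) + lam)) :
    ∀ s : ℝ, 0 ≤ s → (s : EReal) < ω → θ s < π / 2 := by
  intro s hs hsω
  by_contra hcon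
  push_neg at hcon
  -- every point of `[0, s]` is in the domain set
  set S : Set ℝ := {r : ℝ | 0 ≤ r ∧ (r : EReal) < ω} with hS
  have hsub : Icc 0 s ⊆ S := by
    intro r hr
    exact ⟨hr.1, lt_of_le_of_lt (EReal.coe_le_coe_iff.2 hr.2) hsω⟩
  have hcont : ContinuousOn θ (Icc 0 s) := fun r hr =>
    ((hθ r (hsub hr).1 (hsub hr).2).continuousWithinAt).mono hsub
  -- the first time where θ reaches π/2
  set T : Set ℝ := Icc 0 s ∩ θ ⁻¹' Ici (π / 2) with hT
  have hTne : T.Nonempty := ⟨s, ⟨hs, le_rfl⟩, hcon⟩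
  have hTbdd : BddBelow T := ⟨0, fun r hr => hr.1.1⟩
  have hTclosed : IsClosed T :=
    hcont.preimage_isClosed_of_isClosed isClosed_Icc isClosed_Ici
  set s₁ : ℝ := sInf T with hs₁
  have hs₁T : s₁ ∈ T := hTclosed.csInf_mem hTne hTbdd
  have hs₁Icc : s₁ ∈ Icc 0 s := hs₁T.1
  have hs₁S : s₁ ∈ S := hsub hs₁Icc
  have hθs₁ : π / 2 ≤ θ s₁ := hs₁T.2
  have hs₁pos : 0 < s₁ := by
    rcases hs₁Icc.1.lt_or_eq with h | h
    · exact h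
    · exfalso
      have := hθs₁
      rw [← h, hθ0] at this
      linarith [Real.pi_pos]
  -- all earlier points have θ < π/2
  have hlt : ∀ r, 0 ≤ r → r < s₁ → θ r < π / 2 := by
    intro r hr0 hrs₁
    by_contra hge
    push_neg at hge
    have : r ∈ T := ⟨⟨hr0, le_trans hrs₁.le hs₁Icc.2⟩, hge⟩
    exact absurd (csInf_le hTbdd this) (not_le.2 hrs₁)
  -- by continuity from the left, θ s₁ = π/2
  have hθeq : θ s₁ = π / 2 := by
    refine le_antisymm ?_ hθs₁
    have hIco : Ico 0 s₁ ⊆ Icc 0 s := fun r hr =>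
      ⟨hr.1, le_trans hr.2.le hs₁Icc.2⟩
    have htend : Filter.Tendsto θ (nhdsWithin s₁ (Ico 0 s₁)) (nhds (θ s₁)) :=
      ((hcont s₁ hs₁Icc).mono hIco).tendsto
    have : (nhdsWithin s₁ (Ico 0 s₁)).NeBot := right_nhdsWithin_Ico_neBot hs₁pos
    refine le_of_tendsto htend ?_
    filter_upwards [self_mem_nhdsWithin] with r hr
    exact (hlt r hr.1 hr.2).le
  -- the ODE forces θ' s₁ < 0
  have hxω : (s₁ : EReal) < ω := hs₁S.2
  have hd' : θ' s₁ = x s₁ * lam := by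
    have := heq s₁ hs₁Icc.1 hxω
    rw [hθeq, Real.sin_pi_div_two, Real.cos_pi_div_two, mul_one, zero_add] at this
    exact this
  have hdneg : θ' s₁ < 0 := by
    rw [hd']
    exact mul_neg_of_pos_of_neg (hxpos s₁ hs₁pos hxω) hlam
  -- but s₁ is a maximum of θ on [0, s₁], so the left derivative must be ≥ 0
  have hmax : IsMaxOn θ (Icc 0 s₁) s₁ := by
    intro r hr
    rcases hr.2.lt_or_eq with h | h
    · exact le_of_lt (hθeq ▸ hlt r hr.1 h)
    · simp [h]
  have hsub₂ : Icc 0 s₁ ⊆ S := fun r hr =>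
    hsub ⟨hr.1, le_trans hr.2 hs₁Icc.2⟩
  have hderiv : HasDerivWithinAt θ (θ' s₁) (Icc 0 s₁) s₁ :=
    (hθ s₁ hs₁Icc.1 hxω).mono hsub₂
  have hcone : (0 : ℝ) - s₁ ∈ posTangentConeAt (Icc 0 s₁) s₁ := by
    apply sub_mem_posTangentConeAt_of_segment_subset
    rw [segment_symm, segment_eq_Icc hs₁pos.le]
  have hle := hmax.localize.hasFDerivWithinAt_nonpos hderiv.hasFDerivWithinAt hcone
  simp only [ContinuousLinearMap.smulRight_apply, ContinuousLinearMap.one_apply,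
    ContinuousLinearMap.toSpanSingleton_apply, smul_eq_mul, zero_sub] at hle
  nlinarith
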